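/- For every k > 1 and every γ ∈ ℝ^d with |γ| ≤ 2k, the Fourier coefficient of the strength satisfies |σ̂(γ)| ≤ (n²/|β_d|²) k^{m+4n−d−1} M_PL(k) + C₁ k^{−1}. -/

import Mathlib

open MeasureTheory

noncomputable section

/-- `ℝ^d` with the Euclidean structure. -/
abbrev Ed (d : ℕ) := EuclideanSpace ℝ (Fin d)

/-- `β_d = e^{iπ/4}/√(8π)` for `d = 2` and `β_d = 1/(4π)` otherwise (`d = 3`). -/
def betaD (d : ℕ) : ℂ :=
  if d = 2 then Complex.exp (Complex.I * Real.pi / 4) / (Real.sqrt (8 * Real.pi) : ℝ)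
  else 1 / (4 * (Real.pi : ℂ))

/-- Fourier transform `σ̂(γ) = ∫_{ℝ^d} σ(z) e^{-iγ·z} dz` of a real-valued function. -/
def sigmaHat (d : ℕ) (σ : Ed d → ℝ) (γ : Ed d) : ℂ :=
  ∫ z, (σ z : ℂ) * Complex.exp (-Complex.I * ((inner ℝ γ z : ℝ) : ℂ))

/-- Correlation of far-field patterns of the stochastic polyharmonic wave equation:
`F_PL(x̂,ŷ,k) = (β_d²/n²) k^{d+1−4n} (k^{−m} σ̂(k(x̂+ŷ)) + ∫_{B₁} r(z,−kŷ) e^{−ik(x̂+ŷ)·z} dz)`. -/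
def FPL (d n : ℕ) (m : ℝ) (σ : Ed d → ℝ) (r : Ed d → Ed d → ℂ) (k : ℝ)
    (x y : Ed d) : ℂ :=
  (betaD d) ^ 2 / (n : ℂ) ^ 2 * ((k ^ ((d : ℝ) + 1 - 4 * (n : ℝ)) : ℝ) : ℂ) *
    (((k ^ (-m) : ℝ) : ℂ) * sigmaHat d σ (k • (x + y)) +
      ∫ z in Metric.ball (0 : Ed d) 1,
        r z (-(k • y)) * Complex.exp (-Complex.I * ((inner ℝ (k • (x + y)) z : ℝ) : ℂ)))

/-- `M_PL(k) = sup_{x̂,ŷ ∈ S^{d−1}} |F_PL(x̂,ŷ,k)|`. -/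
def MPL (d n : ℕ) (m : ℝ) (σ : Ed d → ℝ) (r : Ed d → Ed d → ℂ) (k : ℝ) : ℝ :=
  sSup {v : ℝ | ∃ x y : Ed d, ‖x‖ = 1 ∧ ‖y‖ = 1 ∧ v = ‖FPL d n m σ r k x y‖}

end

set_option maxHeartbeats 1000000 in
/-- Any vector of norm at most `2` in `ℝ^d`, `d ≥ 2`, is the sum of two unit vectors. -/
lemma exists_unit_sum {d : ℕ} (hd : 2 ≤ d) (v : Ed d) (hv : ‖v‖ ≤ 2) :
    ∃ x y : Ed d, ‖x‖ = 1 ∧ ‖y‖ = 1 ∧ x + y = v := by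
  have hdim : Module.finrank ℝ (Ed d) = d := finrank_euclideanSpace_fin
  have h1 : Module.finrank ℝ (ℝ ∙ v) ≤ 1 := by
    by_cases hv0 : v = 0
    · rw [hv0, Submodule.span_zero_singleton, finrank_bot]; omega
    · rw [finrank_span_singleton hv0]
  have hsum : Module.finrank ℝ (ℝ ∙ v) + Module.finrank ℝ (ℝ ∙ v)ᗮ = d := by
    rw [Submodule.finrank_add_finrank_orthogonal, hdim]
  have hpos : (ℝ ∙ v)ᗮ ≠ ⊥ := by
    intro hb
    rw [hb, finrank_bot] at hsum
    omega
  obtain ⟨w₀, hw₀mem, hw₀⟩ := Submodule.exists_mem_ne_zero_of_ne_bot hpos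
  set w : Ed d := ‖w₀‖⁻¹ • w₀ with hw
  have hww : ‖w‖ = 1 := by
    rw [hw, norm_smul, norm_inv, norm_norm, inv_mul_cancel₀ (norm_ne_zero_iff.mpr hw₀)]
  have horth : (inner ℝ v w : ℝ) = 0 := by
    have := (Submodule.mem_orthogonal _ _).mp hw₀mem v (Submodule.mem_span_singleton_self v)
    rw [hw, real_inner_smul_right, this, mul_zero]
  set t : ℝ := Real.sqrt (1 - ‖v‖ ^ 2 / 4) with ht
  have htsq : t ^ 2 = 1 - ‖v‖ ^ 2 / 4 := by
    rw [ht, Real.sq_sqrt]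
    nlinarith [norm_nonneg v]
  refine ⟨(1/2 : ℝ) • v + t • w, (1/2 : ℝ) • v - t • w, ?_, ?_, by
    rw [add_add_sub_cancel, ← add_smul]; norm_num⟩
  · have h2 : ‖(1/2 : ℝ) • v + t • w‖ ^ 2 = 1 := by
      rw [norm_add_sq_real, real_inner_smul_left, real_inner_smul_right, horth,
        norm_smul, norm_smul]
      have : |t| = t := abs_of_nonneg (Real.sqrt_nonneg _)
      simp only [Real.norm_eq_abs, this, hww]
      rw [abs_of_nonneg (by norm_num : (0:ℝ) ≤ 1/2)]
      nlinarith [norm_nonneg v]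
    have h3 : (‖(1/2 : ℝ) • v + t • w‖ - 1) * (‖(1/2 : ℝ) • v + t • w‖ + 1) = 0 := by
      nlinarith
    rcases mul_eq_zero.mp h3 with h | h
    · linarith
    · nlinarith [norm_nonneg ((1/2 : ℝ) • v + t • w)]
  · have h2 : ‖(1/2 : ℝ) • v - t • w‖ ^ 2 = 1 := by
      rw [norm_sub_sq_real, real_inner_smul_left, real_inner_smul_right, horth,
        norm_smul, norm_smul]
      have : |t| = t := abs_of_nonneg (Real.sqrt_nonneg _)
      simp only [Real.norm_eq_abs, this, hww]
      rw [abs_of_nonneg (by norm_num : (0:ℝ) ≤ 1/2)]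
      nlinarith [norm_nonneg v]
    have h3 : (‖(1/2 : ℝ) • v - t • w‖ - 1) * (‖(1/2 : ℝ) • v - t • w‖ + 1) = 0 := by
      nlinarith
    rcases mul_eq_zero.mp h3 with h | h
    · linarith
    · nlinarith [norm_nonneg ((1/2 : ℝ) • v - t • w)]

lemma betaD_ne_zero (d : ℕ) : betaD d ≠ 0 := by
  unfold betaD
  split
  · apply div_ne_zero (Complex.exp_ne_zero _)
    simp only [ne_eq, Complex.ofReal_eq_zero]
    positivity
  · apply div_ne_zero one_ne_zero
    have : (Real.pi : ℂ) ≠ 0 := by exact_mod_cast Real.pi_ne_zero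
    simp [this]

set_option maxHeartbeats 2000000 in
theorem statement3 (d n : ℕ) (hd : d = 2 ∨ d = 3) (hn : 1 ≤ n) (m C₁ : ℝ) (hC₁ : 0 < C₁)
    (σ : Ed d → ℝ) (hσ_int : Integrable σ) (hσ_nn : ∀ z, 0 ≤ σ z)
    (hσ_supp : ∀ z ∉ Metric.ball (0 : Ed d) 1, σ z = 0)
    (r : Ed d → Ed d → ℂ) (hr_int : ∀ ξ, Integrable (fun z => r z ξ))
    (hr_supp : ∀ ξ : Ed d, ∀ z ∉ Metric.ball (0 : Ed d) 1, r z ξ = 0)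
    (hr_bd : ∀ ξ : Ed d, 1 < ‖ξ‖ →
      (∫ z in Metric.ball (0 : Ed d) 1, ‖r z ξ‖) ≤ C₁ * ‖ξ‖ ^ (-(m + 1)))
    (k : ℝ) (hk : 1 < k) (γ : Ed d) (hγ : ‖γ‖ ≤ 2 * k) :
    ‖sigmaHat d σ γ‖ ≤
      (n : ℝ) ^ 2 / ‖betaD d‖ ^ 2 * k ^ (m + 4 * (n : ℝ) - (d : ℝ) - 1) *
        MPL d n m σ r k + C₁ * k⁻¹ := by
  have hd2 : 2 ≤ d := by rcases hd with h | h <;> omega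
  have hk0 : (0:ℝ) < k := by linarith
  have hkne : k ≠ 0 := ne_of_gt hk0
  -- decompose `k⁻¹ • γ` as a sum of two unit vectors
  have hv : ‖k⁻¹ • γ‖ ≤ 2 := by
    rw [norm_smul, norm_inv, Real.norm_eq_abs, abs_of_pos hk0]
    rw [inv_mul_le_iff₀ hk0]
    linarith
  obtain ⟨x, y, hx, hy, hxy⟩ := exists_unit_sum hd2 (k⁻¹ • γ) hv
  have hky : k • (x + y) = γ := by
    rw [hxy, smul_smul, mul_inv_cancel₀ hkne, one_smul]
  -- express FPL in terms of σ̂(γ)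
  have hF : FPL d n m σ r k x y =
      (betaD d) ^ 2 / (n : ℂ) ^ 2 * ((k ^ ((d : ℝ) + 1 - 4 * (n : ℝ)) : ℝ) : ℂ) *
        (((k ^ (-m) : ℝ) : ℂ) * sigmaHat d σ γ +
          ∫ z in Metric.ball (0 : Ed d) 1,
            r z (-(k • y)) * Complex.exp (-Complex.I * ((inner ℝ γ z : ℝ) : ℂ))) := by
    simp only [FPL, hky]
  set c : ℂ := (betaD d) ^ 2 / (n : ℂ) ^ 2 *
      ((k ^ ((d : ℝ) + 1 - 4 * (n : ℝ)) : ℝ) : ℂ) with hc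
  set I₀ : ℂ := ∫ z in Metric.ball (0 : Ed d) 1,
      r z (-(k • y)) * Complex.exp (-Complex.I * ((inner ℝ γ z : ℝ) : ℂ)) with hI0
  have hn0 : ((n:ℂ)) ≠ 0 := Nat.cast_ne_zero.mpr (by omega)
  have hβ : betaD d ≠ 0 := betaD_ne_zero d
  have hkpow : (k ^ ((d : ℝ) + 1 - 4 * (n : ℝ)) : ℝ) ≠ 0 :=
    ne_of_gt (Real.rpow_pos_of_pos hk0 _)
  have hc0 : c ≠ 0 := by
    rw [hc]
    exact mul_ne_zero (div_ne_zero (pow_ne_zero _ hβ) (pow_ne_zero _ hn0))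
      (Complex.ofReal_ne_zero.mpr hkpow)
  have key : ((k ^ m : ℝ) : ℂ) * ((k ^ (-m) : ℝ) : ℂ) = 1 := by
    rw [← Complex.ofReal_mul, ← Real.rpow_add hk0]
    norm_num
  have hsol : sigmaHat d σ γ =
      ((k ^ m : ℝ) : ℂ) * (c⁻¹ * FPL d n m σ r k x y - I₀) := by
    rw [hF, ← mul_assoc, inv_mul_cancel₀ hc0, one_mul]
    linear_combination (-(sigmaHat d σ γ)) * key
  -- uniform bound on the r-integrals
  have hIbd : ∀ (ξ w : Ed d), ‖ξ‖ = k →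
      ‖∫ z in Metric.ball (0 : Ed d) 1,
        r z ξ * Complex.exp (-Complex.I * ((inner ℝ w z : ℝ) : ℂ))‖ ≤ C₁ * k ^ (-(m+1)) := by
    intro ξ w hξk
    calc ‖∫ z in Metric.ball (0 : Ed d) 1,
          r z ξ * Complex.exp (-Complex.I * ((inner ℝ w z : ℝ) : ℂ))‖
        ≤ ∫ z in Metric.ball (0 : Ed d) 1,
            ‖r z ξ * Complex.exp (-Complex.I * ((inner ℝ w z : ℝ) : ℂ))‖ :=
          norm_integral_le_integral_norm _
      _ = ∫ z in Metric.ball (0 : Ed d) 1, ‖r z ξ‖ := by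
          refine integral_congr_ae (Filter.Eventually.of_forall fun z => ?_)
          dsimp only
          have h0 : (-Complex.I * ((inner ℝ w z : ℝ) : ℂ)).re = 0 := by simp
          rw [norm_mul, Complex.norm_exp, h0,
            Real.exp_zero, mul_one]
      _ ≤ C₁ * ‖ξ‖ ^ (-(m+1)) := hr_bd ξ (by rw [hξk]; exact hk)
      _ = C₁ * k ^ (-(m+1)) := by rw [hξk]
  -- uniform bound on σ̂
  have hσbd : ∀ γ' : Ed d, ‖sigmaHat d σ γ'‖ ≤ ∫ z, |σ z| := by
    intro γ'
    rw [sigmaHat]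
    calc ‖∫ z, (σ z : ℂ) * Complex.exp (-Complex.I * ((inner ℝ γ' z : ℝ) : ℂ))‖
        ≤ ∫ z, ‖(σ z : ℂ) * Complex.exp (-Complex.I * ((inner ℝ γ' z : ℝ) : ℂ))‖ :=
          norm_integral_le_integral_norm _
      _ = ∫ z, |σ z| := by
          refine integral_congr_ae (Filter.Eventually.of_forall fun z => ?_)
          dsimp only
          have h0 : (-Complex.I * ((inner ℝ γ' z : ℝ) : ℂ)).re = 0 := by simp
          rw [norm_mul, Complex.norm_real, Complex.norm_exp, h0,
            Real.exp_zero, mul_one, Real.norm_eq_abs]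
  -- uniform bound on FPL over unit vectors
  have hFbd : ∀ x' y' : Ed d, ‖x'‖ = 1 → ‖y'‖ = 1 →
      ‖FPL d n m σ r k x' y'‖ ≤
        ‖c‖ * (k ^ (-m) * (∫ z, |σ z|) + C₁ * k ^ (-(m+1))) := by
    intro x' y' hx' hy'
    have hξ' : ‖-(k • y')‖ = k := by
      rw [norm_neg, norm_smul, Real.norm_eq_abs, abs_of_pos hk0, hy', mul_one]
    simp only [FPL]
    rw [← hc, norm_mul]
    refine mul_le_mul_of_nonneg_left ?_ (norm_nonneg _)
    calc ‖((k ^ (-m) : ℝ) : ℂ) * sigmaHat d σ (k • (x' + y')) +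
          ∫ z in Metric.ball (0 : Ed d) 1,
            r z (-(k • y')) * Complex.exp (-Complex.I * ((inner ℝ (k • (x' + y')) z : ℝ) : ℂ))‖
        ≤ ‖((k ^ (-m) : ℝ) : ℂ) * sigmaHat d σ (k • (x' + y'))‖ +
            ‖∫ z in Metric.ball (0 : Ed d) 1,
              r z (-(k • y')) * Complex.exp (-Complex.I * ((inner ℝ (k • (x' + y')) z : ℝ) : ℂ))‖ :=
          norm_add_le _ _
      _ ≤ k ^ (-m) * (∫ z, |σ z|) + C₁ * k ^ (-(m+1)) := by
          rw [norm_mul, Complex.norm_real, Real.norm_eq_abs, abs_of_pos (Real.rpow_pos_of_pos hk0 _)]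
          gcongr
          · exact hσbd _
          · exact hIbd _ _ hξ'
  have hbdd : BddAbove {v : ℝ | ∃ x' y' : Ed d, ‖x'‖ = 1 ∧ ‖y'‖ = 1 ∧
      v = ‖FPL d n m σ r k x' y'‖} := by
    refine ⟨‖c‖ * (k ^ (-m) * (∫ z, |σ z|) + C₁ * k ^ (-(m+1))), ?_⟩
    rintro v ⟨x', y', hx', hy', rfl⟩
    exact hFbd x' y' hx' hy'
  have hMF : ‖FPL d n m σ r k x y‖ ≤ MPL d n m σ r k :=
    le_csSup hbdd ⟨x, y, hx, hy, rfl⟩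
  have hM0 : 0 ≤ MPL d n m σ r k := le_trans (norm_nonneg _) hMF
  have hI₀ : ‖I₀‖ ≤ C₁ * k ^ (-(m+1)) := by
    rw [hI0]
    exact hIbd _ _ (by rw [norm_neg, norm_smul, Real.norm_eq_abs, abs_of_pos hk0, hy, mul_one])
  -- main estimate
  have hstep : ‖sigmaHat d σ γ‖ ≤
      k ^ m * ((‖c‖)⁻¹ * MPL d n m σ r k + C₁ * k ^ (-(m+1))) := by
    rw [hsol, norm_mul, Complex.norm_real, Real.norm_eq_abs, abs_of_pos (Real.rpow_pos_of_pos hk0 m)]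
    refine mul_le_mul_of_nonneg_left ?_ (Real.rpow_nonneg hk0.le _)
    calc ‖c⁻¹ * FPL d n m σ r k x y - I₀‖
        ≤ ‖c⁻¹ * FPL d n m σ r k x y‖ + ‖I₀‖ := by
          have := norm_add_le (c⁻¹ * FPL d n m σ r k x y) (-I₀)
          simpa [sub_eq_add_neg] using this
      _ = (‖c‖)⁻¹ * ‖FPL d n m σ r k x y‖ + ‖I₀‖ := by
          rw [norm_mul, norm_inv]
      _ ≤ (‖c‖)⁻¹ * MPL d n m σ r k + C₁ * k ^ (-(m+1)) := by
          gcongr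
  have hcabs : ‖c‖ =
      (‖betaD d‖) ^ 2 / (n : ℝ) ^ 2 * k ^ ((d : ℝ) + 1 - 4 * (n : ℝ)) := by
    rw [hc, norm_mul, norm_div, norm_pow, norm_pow, Complex.norm_real, Complex.norm_natCast, Real.norm_eq_abs,
      abs_of_pos (Real.rpow_pos_of_pos hk0 _)]
  have hβ0 : (0:ℝ) < ‖betaD d‖ := norm_pos_iff.mpr hβ
  have hn0' : (0:ℝ) < (n:ℝ) := by exact_mod_cast Nat.pos_of_ne_zero (by omega)
  have e1 : k ^ m * (‖c‖)⁻¹ =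
      (n : ℝ) ^ 2 / (‖betaD d‖) ^ 2 * k ^ (m + 4 * (n : ℝ) - (d : ℝ) - 1) := by
    rw [hcabs, mul_inv, inv_div, ← Real.rpow_neg hk0.le,
      show m + 4 * (n:ℝ) - (d:ℝ) - 1 = m + -((d:ℝ) + 1 - 4 * (n:ℝ)) by ring,
      Real.rpow_add hk0]
    ring
  have e2 : k ^ m * k ^ (-(m+1)) = k⁻¹ := by
    rw [← Real.rpow_add hk0, show m + -(m+1) = (-1:ℝ) by ring, Real.rpow_neg_one]
  calc ‖sigmaHat d σ γ‖
      ≤ k ^ m * ((‖c‖)⁻¹ * MPL d n m σ r k + C₁ * k ^ (-(m+1))) := hstep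
    _ = (k ^ m * (‖c‖)⁻¹) * MPL d n m σ r k + C₁ * (k ^ m * k ^ (-(m+1))) := by ring
    _ = (n : ℝ) ^ 2 / (‖betaD d‖) ^ 2 * k ^ (m + 4 * (n : ℝ) - (d : ℝ) - 1) *
          MPL d n m σ r k + C₁ * k⁻¹ := by rw [e1, e2]
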